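/- Let k ≥ 3 be an odd integer, let c > 0, let s be an integer with (k+1)/2 ≤ s ≤ k−1, and let a_1 < ⋯ < a_s be distinct real numbers. Consider the homogeneous linear system in (A_1, …, A_s) ∈ ℝ^s given by Σ_{j=1}^{s} A_j · a_j^l · exp(−c·a_j) = 0 for all l ∈ {0, …, (k−3)/2}, together with (when s ≥ (k+3)/2) Σ_{j=1}^{s} A_j · a_j^r · exp(c·a_j) = 0 for all r ∈ {0, …, s − (k+3)/2} (an (s−1) × s system). Then the solution space of this system is exactly one-dimensional. -/

import Mathlib

open Polynomial Finset

lemma rolle_fin {f f' : ℝ → ℝ} (hf : ∀ x, HasDerivAt f (f' x) x) {N : ℕ}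
    (b : Fin (N + 1) → ℝ) (hb : StrictMono b) (hz : ∀ j, f (b j) = 0) :
    ∃ c : Fin N → ℝ, StrictMono c ∧ ∀ j, f' (c j) = 0 := by
  have H : ∀ j : Fin N, ∃ x, x ∈ Set.Ioo (b j.castSucc) (b j.succ) ∧ f' x = 0 := by
    intro j
    have hlt : b j.castSucc < b j.succ := hb (Fin.castSucc_lt_succ : j.castSucc < j.succ)
    obtain ⟨x, hx, hx0⟩ := exists_hasDerivAt_eq_zero hlt
      (fun x _ => (hf x).continuousAt.continuousWithinAt)
      (by rw [hz, hz]) (fun x _ => hf x)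
    exact ⟨x, hx, hx0⟩
  choose cc h1 h2 using H
  refine ⟨cc, ?_, h2⟩
  intro i j hij
  have h3 : i.succ ≤ j.castSucc := by
    rw [Fin.le_def]; rw [Fin.lt_def] at hij; simpa using hij
  calc cc i < b i.succ := (h1 i).2
    _ ≤ b j.castSucc := hb.monotone h3
    _ < cc j := (h1 j).1

lemma withbot_lt_succ {x : WithBot ℕ} {m : ℕ} : x < ((m + 1 : ℕ) : WithBot ℕ) ↔ x ≤ (m : ℕ) := by
  cases x with
  | bot => simpa using WithBot.bot_lt_coe (m+1)
  | coe a =>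
    rw [show (WithBot.some a) = ((a : ℕ) : WithBot ℕ) from (Nat.cast_withBot a).symm,
      Nat.cast_lt, Nat.cast_le]
    exact Nat.lt_succ_iff

lemma combo_zero (m : ℕ) : ∀ (n N : ℕ) (t : ℝ), t ≠ 0 → ∀ p q : ℝ[X],
    p.degree < (m : ℕ) → q.degree < (n : ℕ) → m + n ≤ N →
    ∀ b : Fin N → ℝ, StrictMono b →
    (∀ j, p.eval (b j) + q.eval (b j) * Real.exp (t * b j) = 0) → p = 0 ∧ q = 0 := by
  induction m with
  | zero =>
    intro n N t ht p q hp hq hN b hb h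
    have hp0 : p = 0 := by
      rw [← Polynomial.degree_eq_bot]
      exact Nat.WithBot.lt_zero_iff.mp (by exact_mod_cast hp)
    refine ⟨hp0, ?_⟩
    subst hp0
    have hev : ∀ j : Fin N, q.eval (b j) = 0 := by
      intro j
      have := h j
      simp only [eval_zero, zero_add] at this
      exact (mul_eq_zero.mp this).resolve_right (Real.exp_ne_zero _)
    by_cases hq0 : q = 0
    · exact hq0
    · refine q.eq_zero_of_natDegree_lt_card_of_eval_eq_zero hb.injective hev ?_
      have : q.natDegree < n := (natDegree_lt_iff_degree_lt hq0).mpr hq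
      simpa using this.trans_le (by omega)
  | succ m ih =>
    intro n N t ht p q hp hq hN b hb h
    obtain ⟨N', rfl⟩ : ∃ N', N = N' + 1 := ⟨N - 1, by omega⟩
    set q₁ : ℝ[X] := q.derivative + C t * q with hq₁def
    have hexp : ∀ x : ℝ, HasDerivAt (fun y => Real.exp (t * y)) (t * Real.exp (t * x)) x := by
      intro x
      have h1 : HasDerivAt (fun y : ℝ => t * y) t x := by
        simpa using (hasDerivAt_id x).const_mul t
      exact ((Real.hasDerivAt_exp (t * x)).comp x h1).congr_deriv (mul_comm _ _)
    have hf : ∀ x : ℝ, HasDerivAt (fun y => p.eval y + q.eval y * Real.exp (t * y))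
        (p.derivative.eval x + q₁.eval x * Real.exp (t * x)) x := by
      intro x
      have := (p.hasDerivAt x).add ((q.hasDerivAt x).mul (hexp x))
      refine HasDerivAt.congr_deriv this ?_
      simp [hq₁def]
      ring
    obtain ⟨cc, hcc, hcz⟩ := rolle_fin hf b hb h
    have hpd : p.derivative.degree < (m : ℕ) := by
      by_cases hp0 : p = 0
      · simp [hp0]
      · exact lt_of_lt_of_le (degree_derivative_lt hp0) (withbot_lt_succ.mp hp)
    have hqd : q₁.degree < (n : ℕ) := by
      refine lt_of_le_of_lt (degree_add_le _ _) ?_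
      rw [max_lt_iff]
      constructor
      · exact lt_of_le_of_lt q.degree_derivative_le hq
      · refine lt_of_le_of_lt (degree_mul_le _ _) ?_
        calc (C t).degree + q.degree ≤ 0 + q.degree := by
              gcongr; exact degree_C_le
          _ = q.degree := zero_add _
          _ < n := hq
    obtain ⟨hp', hq'⟩ := ih n N' t ht p.derivative q₁ hpd hqd (by omega) cc hcc hcz
    have hq0 : q = 0 := by
      by_contra hqne
      have h1 : (C t * q).degree = q.degree := by
        rw [degree_mul, degree_C ht, zero_add]
      have h2 : C t * q = -q.derivative := by
        have := hq'
        rw [hq₁def] at this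
        linear_combination this
      have h3 : q.degree ≤ q.derivative.degree := by
        rw [← h1, h2, degree_neg]
      exact absurd (degree_derivative_lt hqne) (not_lt.mpr h3)
    have hp0 : p = 0 := by
      have hnd : p.natDegree = 0 := natDegree_eq_zero_of_derivative_eq_zero hp'
      have hpc : p = C (p.coeff 0) := eq_C_of_natDegree_eq_zero hnd
      have := h ⟨0, by omega⟩
      rw [hq0] at this
      simp at this
      rw [hpc] at this ⊢
      simp at this
      simp [this]
    exact ⟨hp0, hq0⟩

lemma rows_indep (u n N : ℕ) (hN : u + n = N) (c : ℝ) (hc : 0 < c)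
    (b : Fin N → ℝ) (hb : StrictMono b) (g : Fin N → ℝ)
    (h : ∀ j, ∑ i : Fin N, g i * (if (i : ℕ) < u then b j ^ (i : ℕ) * Real.exp (-(c * b j))
      else b j ^ ((i : ℕ) - u) * Real.exp (c * b j)) = 0) :
    g = 0 := by
  classical
  set G : ℕ → ℝ := fun i => if h : i < N then g ⟨i, h⟩ else 0 with hG
  set p : ℝ[X] := ∑ i ∈ Finset.range u, C (G i) * X ^ i with hpdef
  set q : ℝ[X] := ∑ i ∈ Finset.range n, C (G (u + i)) * X ^ i with hqdef
  have key : ∀ x : ℝ, ∑ i : Fin N, g i * (if (i : ℕ) < u then x ^ (i : ℕ) * Real.exp (-(c * x))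
      else x ^ ((i : ℕ) - u) * Real.exp (c * x))
      = p.eval x * Real.exp (-(c * x)) + q.eval x * Real.exp (c * x) := by
    intro x
    have e1 : ∑ i : Fin N, g i * (if (i : ℕ) < u then x ^ (i : ℕ) * Real.exp (-(c * x))
        else x ^ ((i : ℕ) - u) * Real.exp (c * x))
        = ∑ i ∈ Finset.range N, G i * (if i < u then x ^ i * Real.exp (-(c * x))
          else x ^ (i - u) * Real.exp (c * x)) := by
      rw [← Fin.sum_univ_eq_sum_range]
      refine Finset.sum_congr rfl fun i _ => ?_
      simp [hG, i.isLt]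
    rw [e1, ← hN, Finset.sum_range_add]
    congr 1
    · have hpe : p.eval x = ∑ i ∈ Finset.range u, G i * x ^ i := by
        simp [hpdef, eval_finset_sum]
      rw [hpe, Finset.sum_mul]
      exact Finset.sum_congr rfl fun i hi => by
        rw [if_pos (Finset.mem_range.mp hi)]; ring
    · have hqe : q.eval x = ∑ i ∈ Finset.range n, G (u + i) * x ^ i := by
        simp [hqdef, eval_finset_sum]
      rw [hqe, Finset.sum_mul]
      refine Finset.sum_congr rfl fun i hi => ?_
      rw [if_neg (by omega), Nat.add_sub_cancel_left]
      ring
  have h2 : ∀ j : Fin N, p.eval (b j) + q.eval (b j) * Real.exp ((2 * c) * b j) = 0 := by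
    intro j
    have H := h j
    rw [key (b j)] at H
    have e1 : Real.exp (-(c * b j)) * Real.exp (c * b j) = 1 := by
      rw [← Real.exp_add]; simp
    have e2 : Real.exp (c * b j) * Real.exp (c * b j) = Real.exp ((2 * c) * b j) := by
      rw [← Real.exp_add]; congr 1; ring
    linear_combination Real.exp (c * b j) * H - p.eval (b j) * e1 - q.eval (b j) * e2
  have hdp : p.degree < (u : ℕ) := by
    refine lt_of_le_of_lt (degree_sum_le _ _) ?_
    refine (Finset.sup_lt_iff (WithBot.bot_lt_coe u)).mpr ?_
    intro i hi
    refine lt_of_le_of_lt (degree_C_mul_X_pow_le i _) ?_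
    exact Nat.cast_lt.mpr (Finset.mem_range.mp hi)
  have hdq : q.degree < (n : ℕ) := by
    refine lt_of_le_of_lt (degree_sum_le _ _) ?_
    refine (Finset.sup_lt_iff (WithBot.bot_lt_coe n)).mpr ?_
    intro i hi
    refine lt_of_le_of_lt (degree_C_mul_X_pow_le i _) ?_
    exact Nat.cast_lt.mpr (Finset.mem_range.mp hi)
  obtain ⟨hp0, hq0⟩ := combo_zero u n N (2 * c) (by positivity) p q hdp hdq hN.le b hb h2
  funext i
  have hGi : G (i : ℕ) = g i := by simp [hG, i.isLt]
  show g i = 0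
  rw [← hGi]
  by_cases hiu : (i : ℕ) < u
  · have hc1 : p.coeff (i : ℕ) = G (i : ℕ) := by
      simp [hpdef, finset_sum_coeff, coeff_C_mul, coeff_X_pow, Finset.sum_ite_eq, hiu]
    rw [← hc1, hp0, coeff_zero]
  · have hi2 : (i : ℕ) - u < n := by have := i.isLt; omega
    have hc1 : q.coeff ((i : ℕ) - u) = G (i : ℕ) := by
      have : u + ((i : ℕ) - u) = (i : ℕ) := by omega
      simp [hqdef, finset_sum_coeff, coeff_C_mul, coeff_X_pow, Finset.sum_ite_eq, hi2, this]
    rw [← hc1, hq0, coeff_zero]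

/-- The right-sided kernel packet system on points `a_1 < ⋯ < a_s`, with parameters
`k` (odd, `≥ 3`) and `c > 0`: the `(k-1)/2` equations
`∑_j A_j a_j^l exp(-c a_j) = 0` for `l = 0, …, (k-3)/2`, together with (only when
`s ≥ (k+3)/2`) the auxiliary equations `∑_j A_j a_j^r exp(c a_j) = 0` for
`r = 0, …, s - (k+3)/2`; in total `s - 1` equations. -/
def RightSidedKPSystem (k : ℕ) (c : ℝ) {s : ℕ} (a : Fin s → ℝ) (A : Fin s → ℝ) : Prop :=
  (∀ l ≤ (k - 3) / 2, ∑ j, A j * a j ^ l * Real.exp (-(c * a j)) = 0) ∧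
  (∀ r : ℕ, r + (k + 3) / 2 ≤ s → ∑ j, A j * a j ^ r * Real.exp (c * a j) = 0)

/-- For odd `k ≥ 3`, `c > 0`, `(k+1)/2 ≤ s ≤ k-1`, and points
`a_1 < ⋯ < a_s`, the solution space of the right-sided kernel packet system (an
`(s-1) × s` system) is exactly one-dimensional: a nonzero solution exists and any two
solutions are linearly dependent. -/
theorem right_sided_kp_system_solution_space_one_dimensional
    (k : ℕ) (hk3 : 3 ≤ k) (hkodd : Odd k) (c : ℝ) (hc : 0 < c)
    (s : ℕ) (hs1 : (k + 1) / 2 ≤ s) (hs2 : s ≤ k - 1)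
    (a : Fin s → ℝ) (ha : StrictMono a) :
    (∃ A : Fin s → ℝ, A ≠ 0 ∧ RightSidedKPSystem k c a A) ∧
    (∀ A B : Fin s → ℝ, RightSidedKPSystem k c a A → RightSidedKPSystem k c a B →
      ∃ α β : ℝ, ¬(α = 0 ∧ β = 0) ∧ α • A + β • B = 0) := by
  classical
  obtain ⟨u, rfl⟩ : ∃ u, k = 2 * u + 1 := by
    obtain ⟨u, hu⟩ := hkodd; exact ⟨u, by omega⟩
  have hu1 : 1 ≤ u := by omega
  obtain ⟨s', rfl⟩ : ∃ s', s = s' + 1 := ⟨s - 1, by omega⟩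
  have hus : u ≤ s' := by omega
  have hun : u + (s' - u) = s' := by omega
  set M : Matrix (Fin s') (Fin (s' + 1)) ℝ := fun i j =>
    if (i : ℕ) < u then a j ^ (i : ℕ) * Real.exp (-(c * a j))
    else a j ^ ((i : ℕ) - u) * Real.exp (c * a j) with hM
  have hiff : ∀ A : Fin (s' + 1) → ℝ,
      RightSidedKPSystem (2 * u + 1) c a A ↔ M.mulVec A = 0 := by
    intro A
    constructor
    · rintro ⟨h1, h2⟩
      funext i
      show ∑ j, M i j * A j = 0
      by_cases hi : (i : ℕ) < u
      · have h := h1 (i : ℕ) (by omega)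
        rw [← h]
        refine Finset.sum_congr rfl fun j _ => ?_
        simp only [hM, if_pos hi]; ring
      · have hr : ((i : ℕ) - u) + (2 * u + 1 + 3) / 2 ≤ s' + 1 := by
          have := i.isLt; omega
        have h := h2 ((i : ℕ) - u) hr
        rw [← h]
        refine Finset.sum_congr rfl fun j _ => ?_
        simp only [hM, if_neg hi]; ring
    · intro hM0
      have hA : ∀ i : Fin s', ∑ j, M i j * A j = 0 := by
        intro i
        have := congrFun hM0 i
        simpa [Matrix.mulVec, dotProduct] using this
      constructor
      · intro l hl
        have hl' : l < u := by omega
        have h := hA ⟨l, by omega⟩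
        rw [← h]
        refine Finset.sum_congr rfl fun j _ => ?_
        simp only [hM]
        rw [if_pos (by simpa using hl')]
        ring
      · intro r hr
        have hru : u + r < s' := by omega
        have h := hA ⟨u + r, hru⟩
        rw [← h]
        refine Finset.sum_congr rfl fun j _ => ?_
        simp only [hM]
        rw [if_neg (by simp)]
        simp only [Nat.add_sub_cancel_left]
        ring
  constructor
  · -- existence
    have hL : ¬ Function.Injective (Matrix.mulVecLin M) := by
      intro hinj
      have hle := LinearMap.finrank_le_finrank_of_injective hinj
      simp only [Module.finrank_fin_fun] at hle
      omega
    obtain ⟨x, y, hxy, hne⟩ := Function.not_injective_iff.mp hL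
    refine ⟨x - y, sub_ne_zero.mpr hne, (hiff _).mpr ?_⟩
    have h0 : Matrix.mulVecLin M (x - y) = 0 := by rw [map_sub, hxy, sub_self]
    simpa [Matrix.mulVecLin_apply] using h0
  · -- uniqueness
    intro A B hA hB
    by_cases hA0 : A = 0
    · exact ⟨1, 0, by simp, by simp [hA0]⟩
    obtain ⟨j0, hj0⟩ := Function.ne_iff.mp hA0
    simp only [Pi.zero_apply] at hj0
    refine ⟨B j0, -(A j0), fun h => hj0 (neg_eq_zero.mp h.2), ?_⟩
    set Cv : Fin (s' + 1) → ℝ := B j0 • A + (-(A j0)) • B with hCv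
    show Cv = 0
    have hCsol : M.mulVec Cv = 0 := by
      have h1 := (hiff A).mp hA
      have h2 := (hiff B).mp hB
      simp [hCv, Matrix.mulVec_add, Matrix.mulVec_smul, Matrix.mulVec_neg, h1, h2]
    have hCj0 : Cv j0 = 0 := by
      simp only [hCv, Pi.add_apply, Pi.smul_apply, smul_eq_mul]
      ring
    set emb := Fin.succAbove j0 with hemb
    set Msq : Matrix (Fin s') (Fin s') ℝ := fun i j => M i (emb j) with hMsq
    have hdet : Msq.det ≠ 0 := by
      intro hdet0
      obtain ⟨v, hv0, hv⟩ := Matrix.exists_vecMul_eq_zero_iff.mpr hdet0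
      apply hv0
      apply rows_indep u (s' - u) s' hun c hc (a ∘ emb)
        (ha.comp (Fin.strictMono_succAbove j0)) v
      intro j
      have h := congrFun hv j
      simp only [Matrix.vecMul, dotProduct, Pi.zero_apply, hMsq, hM] at h
      simpa [Function.comp] using h
    have hsq : Msq.mulVec (Cv ∘ emb) = 0 := by
      funext i
      have hrow := congrFun hCsol i
      simp only [Matrix.mulVec, dotProduct, Pi.zero_apply] at hrow ⊢
      rw [Fin.sum_univ_succAbove (fun j => M i j * Cv j) j0, hCj0, mul_zero, zero_add] at hrow
      simpa [hMsq, hemb, Function.comp] using hrow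
    have hCemb : Cv ∘ emb = 0 := by
      by_contra hne
      exact hdet (Matrix.exists_mulVec_eq_zero_iff.mp ⟨Cv ∘ emb, hne, hsq⟩)
    funext j
    rcases eq_or_ne j j0 with rfl | hjne
    · exact hCj0
    · obtain ⟨j', rfl⟩ := Fin.exists_succAbove_eq hjne
      exact congrFun hCemb j'
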